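/- Let μ be a continuous (atomless) probability measure on ℝ giving full measure to the positive reals (0,∞), let n ≥ 1, and let X_1,…,X_n, Y_1,…,Y_n be 2n mutually independent random variables each with distribution μ. Then the probability that ∏_{i=1}^k X_i > ∏_{i=1}^k Y_i for every k with 1 ≤ k ≤ n equals (2n choose n)/4^n. -/

import Mathlib

open MeasureTheory ProbabilityTheory Finset
open scoped ENNReal

namespace RandomRaceAux

/-! ### The central binomial convolution identity -/


private lemma cb_step (n k : ℕ) (hk : k ≤ n) :
    (n+1) * (Nat.centralBinom k * Nat.centralBinom (n+1-k)) +
      (k+1) * Nat.centralBinom (k+1) * Nat.centralBinom (n-k) =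
    4*(n+1) * (Nat.centralBinom k * Nat.centralBinom (n-k)) +
      k * (Nat.centralBinom k * Nat.centralBinom (n+1-k)) := by
  obtain ⟨d, rfl⟩ : ∃ d, n = k + d := ⟨n - k, by omega⟩
  have h1 : (k+1) * Nat.centralBinom (k+1) = 2 * (2*k+1) * Nat.centralBinom k :=
    Nat.succ_mul_centralBinom_succ k
  have h2 : (d+1) * Nat.centralBinom (d+1) = 2 * (2*d+1) * Nat.centralBinom d :=
    Nat.succ_mul_centralBinom_succ d
  have e1 : k + d + 1 - k = d + 1 := by omega
  have e2 : k + d - k = d := by omega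
  rw [e1, e2]
  zify at h1 h2 ⊢
  linear_combination (Nat.centralBinom d : ℤ) * h1
    + (Nat.centralBinom k : ℤ) * h2

private lemma cb_conv (n : ℕ) :
    ∑ k ∈ range (n+1), Nat.centralBinom k * Nat.centralBinom (n-k) = 4 ^ n := by
  induction n with
  | zero => simp [Nat.centralBinom]
  | succ n ih =>
    have tel : ∑ k ∈ range (n+1),
        ((n+1) * (Nat.centralBinom k * Nat.centralBinom (n+1-k)) +
          (k+1) * Nat.centralBinom (k+1) * Nat.centralBinom (n-k))
        = ∑ k ∈ range (n+1),
        (4*(n+1) * (Nat.centralBinom k * Nat.centralBinom (n-k)) +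
          k * (Nat.centralBinom k * Nat.centralBinom (n+1-k))) :=
      Finset.sum_congr rfl (fun k hk => cb_step n k (Nat.lt_succ_iff.mp (mem_range.mp hk)))
    have key : (n+1) * ∑ k ∈ range (n+1+1), Nat.centralBinom k * Nat.centralBinom (n+1-k)
        = (n+1) * 4 ^ (n+1) := by
      rw [Finset.sum_range_succ, Nat.mul_add, pow_succ, Nat.mul_comm (4^n) 4]
      simp only [Nat.sub_self, Nat.centralBinom_zero, Nat.mul_one]
      -- use tel
      zify
      have tz : ∑ k ∈ range (n+1),
          (((n:ℤ)+1) * (Nat.centralBinom k * Nat.centralBinom (n+1-k)) +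
            (k+1) * Nat.centralBinom (k+1) * Nat.centralBinom (n-k))
          = ∑ k ∈ range (n+1),
          (4*((n:ℤ)+1) * (Nat.centralBinom k * Nat.centralBinom (n-k)) +
            (k:ℤ) * (Nat.centralBinom k * Nat.centralBinom (n+1-k))) := by
        exact_mod_cast tel
      rw [Finset.sum_add_distrib, Finset.sum_add_distrib] at tz
      -- telescoping of the g-terms
      set g : ℕ → ℤ := fun j => (j:ℤ) * (Nat.centralBinom j * Nat.centralBinom (n+1-j)) with hg
      have gtel : ∑ k ∈ range (n+1), ((k:ℤ)+1) * Nat.centralBinom (k+1) * Nat.centralBinom (n-k)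
          - ∑ k ∈ range (n+1), g k
          = ((n:ℤ)+1) * Nat.centralBinom (n+1) := by
        have hrw : ∀ k ∈ range (n+1), ((k:ℤ)+1) * Nat.centralBinom (k+1) * Nat.centralBinom (n-k)
            = g (k+1) := by
          intro k hk
          have h' : n - k = n + 1 - (k+1) := by omega
          simp only [hg, h']
          push_cast
          ring
        rw [Finset.sum_congr rfl hrw]
        have hs1 : ∑ k ∈ range (n+1+1), g k = ∑ k ∈ range (n+1), g (k+1) + g 0 :=
          Finset.sum_range_succ' g (n+1)
        have hs2 : ∑ k ∈ range (n+1+1), g k = ∑ k ∈ range (n+1), g k + g (n+1) :=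
          Finset.sum_range_succ g (n+1)
        have hg0 : g 0 = 0 := by simp [hg]
        have hgn : g (n+1) = ((n:ℤ)+1) * Nat.centralBinom (n+1) := by
          simp [hg, Nat.centralBinom]
        rw [hgn] at hs2
        linarith [hs1, hs2]
      have ihz : ∑ k ∈ range (n+1), ((Nat.centralBinom k : ℤ) * Nat.centralBinom (n-k)) = 4^n := by
        exact_mod_cast ih
      have expand : ∑ k ∈ range (n+1), 4*((n:ℤ)+1) * (Nat.centralBinom k * Nat.centralBinom (n-k))
          = 4*((n:ℤ)+1) * 4^n := by
        rw [← Finset.mul_sum, ihz]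
      have lhs1 : ∑ k ∈ range (n+1), ((n:ℤ)+1) * (Nat.centralBinom k * Nat.centralBinom (n+1-k))
          = ((n:ℤ)+1) * ∑ k ∈ range (n+1), ((Nat.centralBinom k : ℤ) * Nat.centralBinom (n+1-k)) := by
        rw [Finset.mul_sum]
      push_cast
      linarith [tz, gtel, expand, lhs1]
    have hpos : 0 < n + 1 := Nat.succ_pos n
    exact Nat.eq_of_mul_eq_mul_left hpos key

/-! ### Partial sums on the canonical space -/

noncomputable def S (m k : ℕ) (x : Fin m → ℝ) : ℝ :=
  ∑ i ∈ univ.filter (fun i : Fin m => (i : ℕ) < k), x i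

lemma measurable_S (m k : ℕ) : Measurable (S m k) :=
  Finset.measurable_sum _ (fun i _ => measurable_pi_apply i)

def posSet (m : ℕ) : Set (Fin m → ℝ) := {x | ∀ k, 1 ≤ k → k ≤ m → 0 < S m k x}

lemma measurableSet_posSet (m : ℕ) : MeasurableSet (posSet m) := by
  have h : posSet m = ⋂ (k : ℕ) (_ : 1 ≤ k) (_ : k ≤ m), {x | 0 < S m k x} := by
    ext x; simp [posSet, Set.mem_iInter]
  rw [h]
  exact MeasurableSet.iInter fun k => MeasurableSet.iInter fun _ =>
    MeasurableSet.iInter fun _ => measurableSet_lt measurable_const (measurable_S m k)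

noncomputable def pm (ν : Measure ℝ) (m : ℕ) : Measure (Fin m → ℝ) :=
  Measure.pi fun _ => ν

instance (ν : Measure ℝ) [IsProbabilityMeasure ν] (m : ℕ) : IsProbabilityMeasure (pm ν m) := by
  unfold pm; infer_instance

lemma S_eq_ite (m jj : ℕ) (x : Fin m → ℝ) :
    S m jj x = ∑ i : Fin m, if (i : ℕ) < jj then x i else 0 :=
  Finset.sum_filter _ _

lemma S_castAdd (k l j : ℕ) (hj : j ≤ k) (x : Fin (k+l) → ℝ) :
    S (k+l) j x = S k j (fun i => x (Fin.castAdd l i)) := by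
  rw [S_eq_ite, S_eq_ite, Fin.sum_univ_add]
  have h2 : ∀ i : Fin l, (if ((Fin.natAdd k i : Fin (k+l)) : ℕ) < j then x (Fin.natAdd k i) else 0) = 0 := by
    intro i
    rw [if_neg]
    simp only [Fin.coe_natAdd]
    omega
  simp only [h2, Finset.sum_const_zero, add_zero, Fin.coe_castAdd]

lemma S_natAdd (k l r : ℕ) (x : Fin (k+l) → ℝ) :
    S (k+l) (k+r) x = S k k (fun i => x (Fin.castAdd l i)) + S l r (fun j => x (Fin.natAdd k j)) := by
  rw [S_eq_ite, S_eq_ite, S_eq_ite, Fin.sum_univ_add]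
  congr 1
  · apply Finset.sum_congr rfl
    intro i _
    rw [if_pos (by simp only [Fin.coe_castAdd]; omega), if_pos i.isLt]
  · apply Finset.sum_congr rfl
    intro i _
    simp only [Fin.coe_natAdd]
    by_cases h : (i : ℕ) < r
    · rw [if_pos (by omega), if_pos h]
    · rw [if_neg (by omega), if_neg h]

variable {ν : Measure ℝ} [IsProbabilityMeasure ν]

/-! ### Null sets -/

lemma null_sum (hato : ∀ x : ℝ, ν {x} = 0) (m : ℕ) (I : Finset (Fin m)) (hI : I.Nonempty)
    (c : ℝ) : pm ν m {x | ∑ i ∈ I, x i = c} = 0 := by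
  obtain ⟨i0, hi0⟩ := hI
  cases m with
  | zero => exact i0.elim0
  | succ m' =>
    set J : Finset (Fin m') := univ.filter (fun j => i0.succAbove j ∈ I) with hJ
    have key : ∀ x : Fin (m'+1) → ℝ, ∑ i ∈ I, x i = x i0 + ∑ j ∈ J, x (i0.succAbove j) := by
      intro x
      rw [← Finset.add_sum_erase _ _ hi0]
      congr 1
      have himg : J.image i0.succAbove = I.erase i0 := by
        ext i
        simp only [Finset.mem_image, Finset.mem_erase, hJ, Finset.mem_filter, Finset.mem_univ,
          true_and]
        constructor
        · rintro ⟨j, hj, rfl⟩; exact ⟨Fin.succAbove_ne _ _, hj⟩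
        · rintro ⟨hne, hi⟩
          obtain ⟨j, rfl⟩ := Fin.exists_succAbove_eq hne
          exact ⟨j, hi, rfl⟩
      rw [← himg, Finset.sum_image (fun a _ b _ h => Fin.succAbove_right_injective h)]
    set g : (Fin m' → ℝ) → ℝ := fun y => ∑ j ∈ J, y j with hgdef
    have hg : Measurable g := Finset.measurable_sum _ (fun i _ => measurable_pi_apply i)
    set s : Set (ℝ × (Fin m' → ℝ)) := {p | p.1 + ∑ j ∈ J, p.2 j = c} with hs
    have hsm : MeasurableSet s := by
      have : s = (fun p : ℝ × (Fin m' → ℝ) => p.1 + g p.2) ⁻¹' {c} := by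
        ext p; simp [hs, hgdef]
      rw [this]
      exact (measurable_fst.add (hg.comp measurable_snd)) (measurableSet_singleton c)
    have hA : {x : Fin (m'+1) → ℝ | ∑ i ∈ I, x i = c}
        = (MeasurableEquiv.piFinSuccAbove (fun _ => ℝ) i0) ⁻¹' s := by
      ext x
      simp only [Set.mem_setOf_eq, Set.mem_preimage, hs, MeasurableEquiv.piFinSuccAbove,
        MeasurableEquiv.coe_mk, Fin.insertNthEquiv, Equiv.coe_fn_symm_mk, key x,
        Fin.removeNth]
    have mp := measurePreserving_piFinSuccAbove (fun _ : Fin (m'+1) => ν) i0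
    rw [hA, show pm ν (m'+1) = Measure.pi fun _ => ν from rfl,
      mp.measure_preimage hsm.nullMeasurableSet, ← Measure.prod_swap,
      Measure.map_apply measurable_swap hsm]
    have hsw : Prod.swap ⁻¹' s = {q : (Fin m' → ℝ) × ℝ | q.2 + g q.1 = c} := by
      ext q; simp [hs, hgdef]
    rw [hsw]
    have hswm : MeasurableSet {q : (Fin m' → ℝ) × ℝ | q.2 + g q.1 = c} :=
      (measurable_snd.add (hg.comp measurable_fst)) (measurableSet_singleton c)
    rw [Measure.prod_apply hswm]
    have hfib : ∀ y : Fin m' → ℝ,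
        (Prod.mk y ⁻¹' {q : (Fin m' → ℝ) × ℝ | q.2 + g q.1 = c}) = {c - g y} := by
      intro y; ext t
      simp [Set.mem_preimage, eq_sub_iff_add_eq]
    simp only [hfib, hato]
    simp

/-! ### Symmetry operations -/

lemma map_comp_perm (m : ℕ) (e : Equiv.Perm (Fin m)) :
    Measure.map (fun x : Fin m → ℝ => x ∘ e) (pm ν m) = pm ν m := by
  have hmeas : Measurable (fun x : Fin m → ℝ => x ∘ ⇑e) :=
    measurable_pi_iff.mpr fun i => measurable_pi_apply (e i)
  refine (Measure.pi_eq fun s hs => ?_).symm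
  rw [Measure.map_apply hmeas (MeasurableSet.univ_pi hs)]
  have hpre : (fun x : Fin m → ℝ => x ∘ ⇑e) ⁻¹' (Set.pi Set.univ s)
      = Set.pi Set.univ (fun j => s (e.symm j)) := by
    ext x
    simp only [Set.mem_preimage, Set.mem_pi, Set.mem_univ, true_implies, Function.comp_apply]
    constructor
    · intro h j; simpa using h (e.symm j)
    · intro h i; simpa using h (e i)
  rw [hpre, pm, Measure.pi_pi]
  exact Equiv.prod_comp e.symm (fun i => ν (s i))

lemma map_neg (hsym : Measure.map (fun t : ℝ => -t) ν = ν) (m : ℕ) :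
    Measure.map (fun (x : Fin m → ℝ) (i : Fin m) => -(x i)) (pm ν m) = pm ν m :=
  (measurePreserving_pi (fun _ : Fin m => ν) (fun _ => ν)
    (fun _ => ⟨measurable_neg, hsym⟩)).map_eq

lemma S_rev (k kk : ℕ) (hkk : kk ≤ k) (u : Fin k → ℝ) :
    S k kk (u ∘ ⇑(Fin.revPerm : Equiv.Perm (Fin k))) = S k k u - S k (k - kk) u := by
  have hsplit : S k (k - kk) u + ∑ i ∈ univ.filter (fun i : Fin k => ¬ ((i : ℕ) < k - kk)), u i
      = S k k u := by
    rw [S, S, Finset.sum_filter_add_sum_filter_not]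
    apply Finset.sum_congr _ (fun i _ => rfl)
    ext i; simp [i.isLt]
  have hrev : S k kk (u ∘ ⇑(Fin.revPerm : Equiv.Perm (Fin k)))
      = ∑ i ∈ univ.filter (fun i : Fin k => ¬ ((i : ℕ) < k - kk)), u i := by
    rw [S, Finset.sum_filter, Finset.sum_filter]
    refine Fintype.sum_equiv Fin.revPerm _ _ (fun i => ?_)
    have hiff : ((i : ℕ) < kk) ↔ ¬ ((Fin.revPerm i : ℕ) < k - kk) := by
      have := i.isLt
      simp only [Fin.revPerm_apply, Fin.val_rev]
      omega
    by_cases h : (i : ℕ) < kk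
    · rw [if_pos h, if_pos (hiff.mp h)]; rfl
    · rw [if_neg h, if_neg (fun hc => h (hiff.mpr hc))]
  linarith [hsplit, hrev]

lemma measure_B (k : ℕ) :
    pm ν k {u : Fin k → ℝ | ∀ j, j < k → S k j u < S k k u} = pm ν k (posSet k) := by
  have hB : {u : Fin k → ℝ | ∀ j, j < k → S k j u < S k k u}
      = (fun u : Fin k → ℝ => u ∘ ⇑(Fin.revPerm : Equiv.Perm (Fin k))) ⁻¹' posSet k := by
    ext u
    simp only [Set.mem_setOf_eq, Set.mem_preimage, posSet]
    constructor
    · intro h kk h1 h2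
      have hsr := S_rev k kk h2 u
      have hj : k - kk < k := by omega
      linarith [h _ hj]
    · intro h j hj
      have hsr := S_rev k (k - j) (by omega) u
      rw [show k - (k - j) = j by omega] at hsr
      linarith [h (k - j) (by omega) (by omega)]
  rw [hB, ← Measure.map_apply _ (measurableSet_posSet k), map_comp_perm k Fin.revPerm]
  exact measurable_pi_iff.mpr fun i => measurable_pi_apply _

lemma measure_C (hsym : Measure.map (fun t : ℝ => -t) ν = ν) (l : ℕ) :
    pm ν l {v : Fin l → ℝ | ∀ r, 1 ≤ r → r ≤ l → S l r v < 0} = pm ν l (posSet l) := by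
  have hC : {v : Fin l → ℝ | ∀ r, 1 ≤ r → r ≤ l → S l r v < 0}
      = (fun (v : Fin l → ℝ) (i : Fin l) => -(v i)) ⁻¹' posSet l := by
    ext v
    simp only [Set.mem_setOf_eq, Set.mem_preimage, posSet]
    have hSneg : ∀ r, S l r (fun i => -(v i)) = - S l r v := by
      intro r; rw [S, S, ← Finset.sum_neg_distrib]
    constructor
    · intro h r h1 h2; rw [hSneg r]; linarith [h r h1 h2]
    · intro h r h1 h2; have := h r h1 h2; rw [hSneg r] at this; linarith
  rw [hC, ← Measure.map_apply _ (measurableSet_posSet l), map_neg hsym]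
  exact measurable_pi_iff.mpr fun i => (measurable_pi_apply i).neg

/-! ### The maximum-location events -/

def Mset (m k : ℕ) : Set (Fin m → ℝ) := {x | ∀ j, j ≤ m → j ≠ k → S m j x < S m k x}

lemma measurableSet_Mset (m k : ℕ) : MeasurableSet (Mset m k) := by
  have h : Mset m k = ⋂ (j : ℕ) (_ : j ≤ m) (_ : j ≠ k), {x | S m j x < S m k x} := by
    ext x; simp [Mset, Set.mem_iInter]
  rw [h]
  exact MeasurableSet.iInter fun j => MeasurableSet.iInter fun _ =>
    MeasurableSet.iInter fun _ => measurableSet_lt (measurable_S m j) (measurable_S m k)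

lemma measure_Mset (hsym : Measure.map (fun t : ℝ => -t) ν = ν) (k l : ℕ) :
    pm ν (k+l) (Mset (k+l) k) = pm ν k (posSet k) * pm ν l (posSet l) := by
  classical
  set B : Set (Fin k → ℝ) := {u | ∀ j, j < k → S k j u < S k k u} with hBdef
  set C : Set (Fin l → ℝ) := {v | ∀ r, 1 ≤ r → r ≤ l → S l r v < 0} with hCdef
  have hBm : MeasurableSet B := by
    have h : B = ⋂ (j : ℕ) (_ : j < k), {u | S k j u < S k k u} := by
      ext u; simp [hBdef, Set.mem_iInter]
    rw [h]
    exact MeasurableSet.iInter fun j => MeasurableSet.iInter fun _ =>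
      measurableSet_lt (measurable_S k j) (measurable_S k k)
  have hCm : MeasurableSet C := by
    have h : C = ⋂ (r : ℕ) (_ : 1 ≤ r) (_ : r ≤ l), {v | S l r v < 0} := by
      ext v; simp [hCdef, Set.mem_iInter]
    rw [h]
    exact MeasurableSet.iInter fun r => MeasurableSet.iInter fun _ =>
      MeasurableSet.iInter fun _ => measurableSet_lt (measurable_S l r) measurable_const
  set F : (Fin (k+l) → ℝ) → (Fin k → ℝ) × (Fin l → ℝ) :=
    fun x => (fun i => x (Fin.castAdd l i), fun j => x (Fin.natAdd k j)) with hFdef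
  have hMF : Mset (k+l) k = F ⁻¹' (B ×ˢ C) := by
    ext x
    simp only [Mset, Set.mem_setOf_eq, Set.mem_preimage, Set.mem_prod, hFdef, hBdef, hCdef]
    constructor
    · intro h
      refine ⟨fun j hj => ?_, fun r h1 h2 => ?_⟩
      · have := h j (by omega) (by omega)
        rwa [S_castAdd k l j (by omega) x, S_castAdd k l k le_rfl x] at this
      · have := h (k+r) (by omega) (by omega)
        rw [S_natAdd k l r x, S_castAdd k l k le_rfl x] at this
        linarith
    · rintro ⟨hb, hc⟩ j hjm hjk
      rcases Nat.lt_or_ge j k with hlt | hge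
      · have := hb j hlt
        rwa [S_castAdd k l j (by omega) x, S_castAdd k l k le_rfl x]
      · have hr : j = k + (j - k) := by omega
        have hr1 : 1 ≤ j - k := by omega
        have hr2 : j - k ≤ l := by omega
        have := hc (j-k) hr1 hr2
        rw [hr, S_natAdd k l (j-k) x, S_castAdd k l k le_rfl x]
        linarith
  -- measure-preserving splitting
  have mp1 := (measurePreserving_piCongrLeft (fun _ : Fin (k+l) => ν)
      (finSumFinEquiv : Fin k ⊕ Fin l ≃ Fin (k+l)))
  have mp2 := measurePreserving_sumPiEquivProdPi (fun _ : Fin k ⊕ Fin l => ν)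
  have mp : MeasurePreserving F (pm ν (k+l)) ((pm ν k).prod (pm ν l)) := by
    have hcomp : F = ⇑(MeasurableEquiv.sumPiEquivProdPi (fun _ : Fin k ⊕ Fin l => ℝ)) ∘
        ⇑(MeasurableEquiv.piCongrLeft (fun _ : Fin (k+l) => ℝ) finSumFinEquiv).symm := by
      funext x
      refine Prod.ext ?_ ?_ <;> funext i <;>
        simp [hFdef, MeasurableEquiv.sumPiEquivProdPi, MeasurableEquiv.piCongrLeft,
          Equiv.sumPiEquivProdPi, Equiv.piCongrLeft, Equiv.piCongrLeft']
    rw [hcomp]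
    exact mp2.comp (MeasurePreserving.symm _ mp1)
  rw [hMF, mp.measure_preimage ((hBm.prod hCm)).nullMeasurableSet, Measure.prod_prod]
  rw [show (pm ν k) B = pm ν k (posSet k) from measure_B k,
    show (pm ν l) C = pm ν l (posSet l) from measure_C hsym l]

/-! ### The convolution equation -/

lemma sum_conv (hsym : Measure.map (fun t : ℝ => -t) ν = ν) (hato : ∀ x : ℝ, ν {x} = 0)
    (m : ℕ) :
    ∑ k ∈ range (m+1), pm ν k (posSet k) * pm ν (m-k) (posSet (m-k)) = 1 := by
  classical
  set U : Set (Fin m → ℝ) := ⋃ k ∈ range (m+1), Mset m k with hU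
  have hdisj : (↑(range (m+1)) : Set ℕ).PairwiseDisjoint (Mset m ·) := by
    intro j hj k hk hjk
    simp only [Function.onFun]
    rw [Set.disjoint_left]
    intro x hxj hxk
    simp only [Finset.coe_range, Set.mem_Iio] at hj hk
    exact absurd ((hxj k (by omega) (Ne.symm hjk)).trans (hxk j (by omega) hjk)) (lt_irrefl _)
  have hsum : pm ν m U = ∑ k ∈ range (m+1), pm ν m (Mset m k) :=
    measure_biUnion_finset hdisj (fun k _ => measurableSet_Mset m k)
  -- the union has full measure
  have hUm : MeasurableSet U := (range (m+1)).measurableSet_biUnion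
      (fun k _ => measurableSet_Mset m k)
  have hUc : pm ν m Uᶜ = 0 := by
    set N : Set (Fin m → ℝ) :=
      ⋃ (j : ℕ) (k : ℕ) (_ : j < k) (_ : k ≤ m), {x | S m j x = S m k x} with hN
    have hsub : Uᶜ ⊆ N := by
      intro x hx
      simp only [hU, Set.mem_compl_iff, Set.mem_iUnion, not_exists] at hx
      obtain ⟨k, hkmem, hmax⟩ := Finset.exists_max_image (range (m+1))
        (fun j => S m j x) ⟨0, by simp⟩
      have hkm : k ≤ m := by simpa [Nat.lt_succ_iff] using hkmem
      have : ¬ (x ∈ Mset m k) := fun hmem => hx k (by simpa [Nat.lt_succ_iff] using hkm) hmem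
      simp only [Mset, Set.mem_setOf_eq, not_forall] at this
      obtain ⟨j, hjm, hjk, hnlt⟩ := this
      have hle : S m j x ≤ S m k x := hmax j (by simp [Nat.lt_succ_iff, hjm])
      have heq : S m j x = S m k x := le_antisymm hle (not_lt.mp hnlt)
      simp only [hN, Set.mem_iUnion]
      rcases Nat.lt_or_ge j k with h | h
      · exact ⟨j, k, h, hkm, heq⟩
      · exact ⟨k, j, by omega, hjm, heq.symm⟩
    refine measure_mono_null hsub ?_
    refine measure_iUnion_null fun j => measure_iUnion_null fun k => ?_
    refine measure_iUnion_null fun hjk => measure_iUnion_null fun hkm => ?_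
    set I : Finset (Fin m) := univ.filter (fun i : Fin m => j ≤ (i : ℕ) ∧ (i : ℕ) < k) with hI
    have hIne : I.Nonempty := ⟨⟨j, by omega⟩, by simp [hI]; omega⟩
    have hdiff : ∀ x : Fin m → ℝ, S m k x - S m j x = ∑ i ∈ I, x i := by
      intro x
      rw [S_eq_ite, S_eq_ite, ← Finset.sum_sub_distrib, hI, Finset.sum_filter]
      apply Finset.sum_congr rfl
      intro i _
      by_cases h1 : (i : ℕ) < j
      · rw [if_pos (by omega), if_pos h1, if_neg (by omega)]; ring
      · by_cases h2 : (i : ℕ) < k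
        · rw [if_pos h2, if_neg h1, if_pos (by omega)]; ring
        · rw [if_neg h2, if_neg h1, if_neg (by omega)]; ring
    have hset : {x : Fin m → ℝ | S m j x = S m k x} = {x | ∑ i ∈ I, x i = 0} := by
      ext x
      simp only [Set.mem_setOf_eq, ← hdiff x]
      constructor <;> intro h <;> linarith
    rw [hset]
    exact null_sum hato m I hIne 0
  have hU1 : pm ν m U = 1 := by
    refine le_antisymm prob_le_one ?_
    have : (1:ℝ≥0∞) = pm ν m (U ∪ Uᶜ) := by rw [Set.union_compl_self]; simp
    calc (1:ℝ≥0∞) = pm ν m (U ∪ Uᶜ) := this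
      _ ≤ pm ν m U + pm ν m Uᶜ := measure_union_le _ _
      _ = pm ν m U := by rw [hUc, add_zero]
  rw [← hU1, hsum]
  apply Finset.sum_congr rfl
  intro k hk
  have hkm : k ≤ m := by simpa [Nat.lt_succ_iff] using hk
  obtain ⟨l, rfl⟩ := Nat.exists_eq_add_of_le hkm
  rw [Nat.add_sub_cancel_left]
  exact (measure_Mset hsym k l).symm

/-! ### Solving the recursion -/

lemma posSet_zero_measure : pm ν 0 (posSet 0) = 1 := by
  have : posSet 0 = Set.univ := by
    ext x; simp only [posSet, Set.mem_setOf_eq, Set.mem_univ, iff_true]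
    intro k h1 h2; omega
  rw [this]; simp

private lemma decomp_sum (h : ℕ → ℝ≥0∞) (mm : ℕ) :
    ∑ k ∈ range (mm+1+1), h k = (∑ i ∈ range mm, h (i+1)) + h 0 + h (mm+1) := by
  rw [Finset.sum_range_succ, Finset.sum_range_succ']

lemma posSet_measure (hsym : Measure.map (fun t : ℝ => -t) ν = ν)
    (hato : ∀ x : ℝ, ν {x} = 0) (m : ℕ) :
    pm ν m (posSet m) = (Nat.centralBinom m : ℝ≥0∞) / 4 ^ m := by
  induction m using Nat.strong_induction_on with
  | _ m ih =>
    match m, ih with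
    | 0, _ => simpa [Nat.centralBinom] using posSet_zero_measure (ν := ν)
    | Nat.succ mm, ih =>
      have h4ne0 : ∀ r : ℕ, ((4:ℝ≥0∞)) ^ r ≠ 0 := fun r => pow_ne_zero r (by norm_num)
      have h4nt : ∀ r : ℕ, ((4:ℝ≥0∞)) ^ r ≠ ∞ := fun r => ENNReal.pow_ne_top (by norm_num)
      have key := sum_conv hsym hato (mm+1)
      have keyb : ∑ k ∈ range (mm+1+1),
          ((Nat.centralBinom k * Nat.centralBinom (mm+1-k) : ℕ) : ℝ≥0∞) / 4 ^ (mm+1) = 1 := by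
        simp_rw [div_eq_mul_inv]
        rw [← Finset.sum_mul, ← Nat.cast_sum, cb_conv (mm+1), ← div_eq_mul_inv]
        rw [show (((4:ℕ) ^ (mm+1) : ℕ) : ℝ≥0∞) = (4:ℝ≥0∞) ^ (mm+1) by push_cast; ring]
        exact ENNReal.div_self (h4ne0 _) (h4nt _)
      rw [decomp_sum] at key keyb
      have hfg : ∀ i ∈ range mm,
          pm ν (i+1) (posSet (i+1)) * pm ν (mm+1-(i+1)) (posSet (mm+1-(i+1)))
          = ((Nat.centralBinom (i+1) * Nat.centralBinom (mm+1-(i+1)) : ℕ) : ℝ≥0∞) / 4 ^ (mm+1) := by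
        intro i hi
        have hi' : i < mm := by simpa using hi
        rw [ih (i+1) (by omega), ih (mm+1-(i+1)) (by omega)]
        rw [div_eq_mul_inv, div_eq_mul_inv, div_eq_mul_inv, mul_mul_mul_comm,
          ← ENNReal.mul_inv (Or.inl (h4ne0 _)) (Or.inl (h4nt _)), ← pow_add,
          show (i+1) + (mm+1 - (i+1)) = mm+1 by omega]
        push_cast
        ring
      rw [Finset.sum_congr rfl hfg] at key
      have hzero_sub : pm ν (mm+1-0) (posSet (mm+1-0)) = pm ν (mm+1) (posSet (mm+1)) := by rw [Nat.sub_zero]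
      have hself_sub : pm ν (mm+1-(mm+1)) (posSet (mm+1-(mm+1))) = 1 := by
        rw [Nat.sub_self]; exact posSet_zero_measure
      rw [hzero_sub, hself_sub, posSet_zero_measure, one_mul, mul_one] at key
      have hg0 : ((Nat.centralBinom 0 * Nat.centralBinom (mm+1-0) : ℕ) : ℝ≥0∞) / 4 ^ (mm+1)
          = (Nat.centralBinom (mm+1) : ℝ≥0∞) / 4 ^ (mm+1) := by
        norm_num [Nat.centralBinom]
      have hgm : ((Nat.centralBinom (mm+1) * Nat.centralBinom (mm+1-(mm+1)) : ℕ) : ℝ≥0∞) / 4 ^ (mm+1)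
          = (Nat.centralBinom (mm+1) : ℝ≥0∞) / 4 ^ (mm+1) := by
        rw [Nat.sub_self]
        norm_num [Nat.centralBinom]
      rw [hg0, hgm] at keyb
      -- key : Mid + a + a = 1, keyb : Mid + b + b = 1
      set Mid : ℝ≥0∞ := ∑ i ∈ range mm,
        ((Nat.centralBinom (i+1) * Nat.centralBinom (mm+1-(i+1)) : ℕ) : ℝ≥0∞) / 4 ^ (mm+1)
        with hMid
      set A : ℝ≥0∞ := pm ν (mm+1) (posSet (mm+1)) with hA
      set b : ℝ≥0∞ := (Nat.centralBinom (mm+1) : ℝ≥0∞) / 4 ^ (mm+1) with hbdef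
      have hMidne : Mid ≠ ∞ := by
        have hle : Mid ≤ 1 := by
          rw [← key]
          exact le_add_right (le_add_right le_rfl)
        exact ne_top_of_le_ne_top ENNReal.one_ne_top hle
      have hane : A ≠ ∞ := measure_ne_top _ _
      have hbne : b ≠ ∞ := by
        rw [hbdef]
        exact (ENNReal.div_lt_top (by simp) (h4ne0 _)).ne
      have e1 := congrArg ENNReal.toReal key
      have e2 := congrArg ENNReal.toReal keyb
      rw [ENNReal.toReal_add (ENNReal.add_ne_top.mpr ⟨hMidne, hane⟩) hane,
        ENNReal.toReal_add hMidne hane, ENNReal.toReal_one] at e1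
      rw [ENNReal.toReal_add (ENNReal.add_ne_top.mpr ⟨hMidne, hbne⟩) hbne,
        ENNReal.toReal_add hMidne hbne, ENNReal.toReal_one] at e2
      have heq : A.toReal = b.toReal := by linarith
      exact (ENNReal.toReal_eq_toReal_iff' hane hbne).mp heq

end RandomRaceAux



open RandomRaceAux in
/-- **Multiplicative random race.** If `μ` is an atomless probability measure on `ℝ`
concentrated on the positive reals, and `X 0, …, X (n-1), Y 0, …, Y (n-1)` are `2n`
mutually independent samples from `μ`, then the probability that every partial product
of the `X`'s strictly exceeds the corresponding partial product of the `Y`'s is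
`(2n choose n) / 4^n`. -/
theorem random_race_multiplicative_leading_probability
    {Ω : Type*} [MeasurableSpace Ω] (P : Measure Ω) [IsProbabilityMeasure P]
    (μ : Measure ℝ) [IsProbabilityMeasure μ] (hμ : ∀ x : ℝ, μ {x} = 0)
    (hpos : μ (Set.Ioi (0 : ℝ)) = 1)
    (n : ℕ) (hn : 1 ≤ n)
    (X Y : Fin n → Ω → ℝ)
    (hXmeas : ∀ i, Measurable (X i)) (hYmeas : ∀ i, Measurable (Y i))
    (hindep : iIndepFun (Sum.elim X Y) P)
    (hXlaw : ∀ i, Measure.map (X i) P = μ) (hYlaw : ∀ i, Measure.map (Y i) P = μ) :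
    P {ω | ∀ k : ℕ, 1 ≤ k → k ≤ n →
        (∏ i ∈ univ.filter (fun i : Fin n => (i : ℕ) < k), Y i ω) <
          ∏ i ∈ univ.filter (fun i : Fin n => (i : ℕ) < k), X i ω} =
      (Nat.choose (2 * n) n : ℝ≥0∞) / 4 ^ n := by
  classical
  -- the measure μ gives no mass to the non-positive reals
  have hIic : μ (Set.Iic (0:ℝ)) = 0 := by
    have hc : μ (Set.Ioi (0:ℝ))ᶜ = μ Set.univ - μ (Set.Ioi (0:ℝ)) :=
      measure_compl measurableSet_Ioi (measure_ne_top μ _)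
    rw [measure_univ, hpos, tsub_self] at hc
    rwa [Set.compl_Ioi] at hc
  -- the step distribution
  set g : ℝ × ℝ → ℝ := fun p => Real.log p.1 - Real.log p.2 with hgdef
  have hgm : Measurable g :=
    (Real.measurable_log.comp measurable_fst).sub (Real.measurable_log.comp measurable_snd)
  set ν : Measure ℝ := Measure.map g (μ.prod μ) with hν
  have : IsProbabilityMeasure ν := Measure.isProbabilityMeasure_map hgm.aemeasurable
  have hsym : Measure.map (fun t : ℝ => -t) ν = ν := by
    rw [hν, Measure.map_map measurable_neg hgm]
    have hcomp : ((fun t : ℝ => -t) ∘ g) = g ∘ Prod.swap := by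
      funext p; simp [hgdef, neg_sub]
    rw [hcomp, ← Measure.map_map hgm measurable_swap, Measure.prod_swap]
  have hato : ∀ c : ℝ, ν {c} = 0 := by
    intro c
    rw [hν, Measure.map_apply hgm (measurableSet_singleton c),
      Measure.prod_apply (hgm (measurableSet_singleton c))]
    have hfib : ∀ a : ℝ, μ (Prod.mk a ⁻¹' (g ⁻¹' {c})) = 0 := by
      intro a
      have hsub : (Prod.mk a ⁻¹' (g ⁻¹' {c})) ⊆
          Set.Iic 0 ∪ {Real.exp (Real.log a - c)} := by
        intro b hb
        simp only [Set.mem_preimage, Set.mem_singleton_iff, hgdef] at hb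
        rcases le_or_gt b 0 with hb0 | hb0
        · exact Or.inl hb0
        · right
          have : Real.log b = Real.log a - c := by linarith
          rw [Set.mem_singleton_iff, ← this, Real.exp_log hb0]
      refine measure_mono_null hsub (measure_union_null hIic (hμ _))
    simp only [hfib, lintegral_zero]
  -- joint law of the 2n variables
  set T : Ω → (Fin n ⊕ Fin n → ℝ) := fun ω j => Sum.elim X Y j ω with hT
  have hTm : Measurable T := by
    refine measurable_pi_iff.mpr fun j => ?_
    cases j with
    | inl i => exact hXmeas i
    | inr i => exact hYmeas i
  have hTlaw : Measure.map T P = Measure.pi (fun _ : Fin n ⊕ Fin n => μ) := by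
    refine (Measure.pi_eq fun s hs => ?_).symm
    rw [Measure.map_apply hTm (MeasurableSet.univ_pi hs)]
    have hpre : T ⁻¹' Set.pi Set.univ s
        = ⋂ j ∈ (Finset.univ : Finset (Fin n ⊕ Fin n)), Sum.elim X Y j ⁻¹' s j := by
      ext ω; simp [hT, Set.mem_pi]
    rw [hpre, hindep.measure_inter_preimage_eq_mul Finset.univ (fun j _ => hs j)]
    refine Finset.prod_congr rfl fun j _ => ?_
    cases j with
    | inl i =>
      show P (X i ⁻¹' s (Sum.inl i)) = μ (s (Sum.inl i))
      rw [← hXlaw i, Measure.map_apply (hXmeas i) (hs _)]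
    | inr i =>
      show P (Y i ⁻¹' s (Sum.inr i)) = μ (s (Sum.inr i))
      rw [← hYlaw i, Measure.map_apply (hYmeas i) (hs _)]
  -- the walk increments
  set W : Ω → (Fin n → ℝ) := fun ω i => Real.log (X i ω) - Real.log (Y i ω) with hW
  have hWm : Measurable W := measurable_pi_iff.mpr fun i =>
    (Real.measurable_log.comp (hXmeas i)).sub (Real.measurable_log.comp (hYmeas i))
  set φ : (Fin n ⊕ Fin n → ℝ) → (Fin n → ℝ) :=
    fun f i => Real.log (f (Sum.inl i)) - Real.log (f (Sum.inr i)) with hφ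
  have hφm : Measurable φ := measurable_pi_iff.mpr fun i =>
    (Real.measurable_log.comp (measurable_pi_apply _)).sub
      (Real.measurable_log.comp (measurable_pi_apply _))
  have hWlaw : Measure.map W P = pm ν n := by
    have hWT : W = φ ∘ T := rfl
    rw [hWT, ← Measure.map_map hφm hTm, hTlaw]
    -- chain of measure preserving maps
    have mp1 := measurePreserving_sumPiEquivProdPi (fun _ : Fin n ⊕ Fin n => μ)
    have mp2 := measurePreserving_arrowProdEquivProdArrow ℝ ℝ (Fin n)
      (fun _ => μ) (fun _ => μ)
    have mp3 : MeasurePreserving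
        (fun (h : Fin n → ℝ × ℝ) (i : Fin n) => Real.log (h i).1 - Real.log (h i).2)
        (Measure.pi fun _ => μ.prod μ) (pm ν n) :=
      measurePreserving_pi (fun _ : Fin n => μ.prod μ) (fun _ => ν)
        (fun _ => ⟨hgm, rfl⟩)
    have mp : MeasurePreserving
        ((fun (h : Fin n → ℝ × ℝ) (i : Fin n) => Real.log (h i).1 - Real.log (h i).2) ∘
          (⇑(MeasurableEquiv.arrowProdEquivProdArrow ℝ ℝ (Fin n)).symm ∘
            ⇑(MeasurableEquiv.sumPiEquivProdPi (fun _ : Fin n ⊕ Fin n => ℝ))))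
        (Measure.pi (fun _ : Fin n ⊕ Fin n => μ)) (pm ν n) :=
      mp3.comp ((MeasurePreserving.symm _ mp2).comp mp1)
    have hcomp : φ = (fun (h : Fin n → ℝ × ℝ) (i : Fin n) =>
          Real.log (h i).1 - Real.log (h i).2) ∘
        (⇑(MeasurableEquiv.arrowProdEquivProdArrow ℝ ℝ (Fin n)).symm ∘
          ⇑(MeasurableEquiv.sumPiEquivProdPi (fun _ : Fin n ⊕ Fin n => ℝ))) := by
      funext f i
      simp [hφ, MeasurableEquiv.sumPiEquivProdPi, Equiv.sumPiEquivProdPi,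
        MeasurableEquiv.arrowProdEquivProdArrow, Equiv.arrowProdEquivProdArrow]
    rw [hcomp]
    exact mp.map_eq
  -- almost sure positivity
  have hG : ∀ᵐ ω ∂P, ∀ i : Fin n, 0 < X i ω ∧ 0 < Y i ω := by
    rw [MeasureTheory.ae_iff]
    have hsub : {ω | ¬ ∀ i : Fin n, 0 < X i ω ∧ 0 < Y i ω} ⊆
        ⋃ i : Fin n, (X i ⁻¹' (Set.Ioi 0)ᶜ ∪ Y i ⁻¹' (Set.Ioi 0)ᶜ) := by
      intro ω hω
      simp only [Set.mem_setOf_eq, not_forall] at hω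
      obtain ⟨i, hi⟩ := hω
      simp only [Set.mem_iUnion, Set.mem_union, Set.mem_preimage, Set.mem_compl_iff,
        Set.mem_Ioi]
      exact ⟨i, by tauto⟩
    refine measure_mono_null hsub (measure_iUnion_null fun i => measure_union_null ?_ ?_)
    · rw [← Measure.map_apply (hXmeas i) measurableSet_Ioi.compl, hXlaw i, Set.compl_Ioi, hIic]
    · rw [← Measure.map_apply (hYmeas i) measurableSet_Ioi.compl, hYlaw i, Set.compl_Ioi, hIic]
  -- the two events agree almost surely
  have hae : {ω | ∀ k : ℕ, 1 ≤ k → k ≤ n →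
        (∏ i ∈ univ.filter (fun i : Fin n => (i : ℕ) < k), Y i ω) <
          ∏ i ∈ univ.filter (fun i : Fin n => (i : ℕ) < k), X i ω}
      =ᵐ[P] (W ⁻¹' posSet n) := by
    rw [Filter.eventuallyEq_set]
    filter_upwards [hG] with ω hω
    simp only [Set.mem_setOf_eq, Set.mem_preimage, posSet]
    refine forall_congr' fun k => forall_congr' fun h1 => forall_congr' fun h2 => ?_
    set t := univ.filter (fun i : Fin n => (i : ℕ) < k) with ht
    have hXpos : ∀ i ∈ t, (0:ℝ) < X i ω := fun i _ => (hω i).1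
    have hYpos : ∀ i ∈ t, (0:ℝ) < Y i ω := fun i _ => (hω i).2
    have hprodX : (0:ℝ) < ∏ i ∈ t, X i ω := Finset.prod_pos hXpos
    have hprodY : (0:ℝ) < ∏ i ∈ t, Y i ω := Finset.prod_pos hYpos
    have hSW : S n k (W ω) = Real.log (∏ i ∈ t, X i ω) - Real.log (∏ i ∈ t, Y i ω) := by
      rw [Real.log_prod (fun i hi => (hXpos i hi).ne'),
        Real.log_prod (fun i hi => (hYpos i hi).ne'), ← Finset.sum_sub_distrib]
      rfl
    constructor
    · intro hlt
      rw [hSW]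
      have := (Real.log_lt_log_iff hprodY hprodX).mpr hlt
      linarith
    · intro hpos'
      rw [hSW] at hpos'
      exact (Real.log_lt_log_iff hprodY hprodX).mp (by linarith)
  rw [measure_congr hae, ← Measure.map_apply hWm (measurableSet_posSet n), hWlaw,
    posSet_measure hsym hato n]
  rfl
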